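/- Let $E: \mathcal{B}([0,2\pi)) \to \mathcal{L}(H)$ be a covariant normalized operator measure, i.e., $E([0,2\pi)) = I$ and $R(\theta) E(X) R(\theta)^* = E(X \oplus \theta)$ where $R(\theta) = \sum_{n\in\mathbb{Z}} e^{in\theta} |n\rangle\langle n|$. Then there exist complex numbers $c_{n,m}$ with $c_{n,n} = 1$ such that $\langle n, E(X) m\rangle = c_{n,m}\, (2\pi)^{-1}\int_X e^{i(n-m)\theta}\, d\theta$ for all $n, m \in \mathbb{Z}$ and Borel $X$. -/

import Mathlib

open MeasureTheory Complex

/-- Addition by `θ` modulo `2π` on `[0, 2π)`. -/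
noncomputable def wrapAdd (θ x : ℝ) : ℝ :=
  if x + θ < 2 * Real.pi then x + θ else x + θ - 2 * Real.pi

section AuxLemmas
open Set

lemma signed_ext_Ico (s t : SignedMeasure ℝ)
    (h : ∀ a b : ℝ, a < b → s (Set.Ico a b) = t (Set.Ico a b)) : s = t := by
  have hval : ∀ (u : SignedMeasure ℝ) (A : Set ℝ), MeasurableSet A →
      u A = (u.toJordanDecomposition.posPart A).toReal
        - (u.toJordanDecomposition.negPart A).toReal := by
    intro u A hA
    conv_lhs => rw [← u.toSignedMeasure_toJordanDecomposition]
    rw [JordanDecomposition.toSignedMeasure, VectorMeasure.sub_apply,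
      Measure.toSignedMeasure_apply_measurable hA, Measure.toSignedMeasure_apply_measurable hA]
    rfl
  set sp := s.toJordanDecomposition.posPart with hsp
  set sn := s.toJordanDecomposition.negPart with hsn
  set tp := t.toJordanDecomposition.posPart with htp
  set tn := t.toJordanDecomposition.negPart with htn
  have hPQ : sp + tn = tp + sn := by
    apply Measure.ext_of_Ico
    intro a b hab
    have hA : MeasurableSet (Set.Ico a b) := measurableSet_Ico
    have h1 := hval s _ hA
    have h2 := hval t _ hA
    rw [h a b hab] at h1
    rw [← hsp, ← hsn] at h1
    rw [← htp, ← htn] at h2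
    have e1 : (sp (Set.Ico a b)).toReal + (tn (Set.Ico a b)).toReal
        = (tp (Set.Ico a b)).toReal + (sn (Set.Ico a b)).toReal := by
      linarith [h1, h2]
    simp only [Measure.coe_add, Pi.add_apply]
    rw [← ENNReal.toReal_eq_toReal_iff' (by finiteness) (by finiteness),
      ENNReal.toReal_add (by finiteness) (by finiteness),
      ENNReal.toReal_add (by finiteness) (by finiteness)]
    exact e1
  ext A hA
  have h1 := hval s A hA
  have h2 := hval t A hA
  rw [← hsp, ← hsn] at h1
  rw [← htp, ← htn] at h2
  have e2 : sp A + tn A = tp A + sn A := by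
    rw [← Measure.add_apply, ← Measure.add_apply, hPQ]
  have e3 : (sp A).toReal + (tn A).toReal = (tp A).toReal + (sn A).toReal := by
    rw [← ENNReal.toReal_add (by finiteness) (by finiteness),
      ← ENNReal.toReal_add (by finiteness) (by finiteness), e2]
  rw [h1, h2]; linarith

lemma complex_ext_Ico (s t : ComplexMeasure ℝ)
    (h : ∀ a b : ℝ, a < b → s (Set.Ico a b) = t (Set.Ico a b)) : s = t := by
  have hre : ComplexMeasure.re s = ComplexMeasure.re t := by
    apply signed_ext_Ico
    intro a b hab
    show (ComplexMeasure.re s) (Set.Ico a b) = (ComplexMeasure.re t) (Set.Ico a b)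
    simp only [ComplexMeasure.re, VectorMeasure.mapRangeₗ, LinearMap.coe_mk, AddHom.coe_mk]
    show reCLM (s (Set.Ico a b)) = reCLM (t (Set.Ico a b))
    rw [h a b hab]
  have him : ComplexMeasure.im s = ComplexMeasure.im t := by
    apply signed_ext_Ico
    intro a b hab
    show (ComplexMeasure.im s) (Set.Ico a b) = (ComplexMeasure.im t) (Set.Ico a b)
    simp only [ComplexMeasure.im, VectorMeasure.mapRangeₗ, LinearMap.coe_mk, AddHom.coe_mk]
    show imCLM (s (Set.Ico a b)) = imCLM (t (Set.Ico a b))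
    rw [h a b hab]
  rw [← s.toComplexMeasure_to_signedMeasure, ← t.toComplexMeasure_to_signedMeasure, hre, him]

section Key

variable (μs : Set ℝ → ℂ)

lemma mu_empty
    (hσ : ∀ g : ℕ → Set ℝ, (∀ i, MeasurableSet (g i)) →
      (∀ i, g i ⊆ Set.Ico 0 (2 * Real.pi)) → Pairwise (Function.onFun Disjoint g) →
      HasSum (fun i => μs (g i)) (μs (⋃ i, g i))) : μs ∅ = 0 := by
  have h := hσ (fun _ => ∅) (fun _ => MeasurableSet.empty) (fun _ => empty_subset _)
    (fun i j _ => by simp [Function.onFun])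
  have h2 : Filter.Tendsto (fun _ : ℕ => μs ∅) Filter.atTop (nhds 0) :=
    h.summable.tendsto_atTop_zero
  exact tendsto_nhds_unique tendsto_const_nhds h2

lemma mu_union
    (hσ : ∀ g : ℕ → Set ℝ, (∀ i, MeasurableSet (g i)) →
      (∀ i, g i ⊆ Set.Ico 0 (2 * Real.pi)) → Pairwise (Function.onFun Disjoint g) →
      HasSum (fun i => μs (g i)) (μs (⋃ i, g i)))
    (A B : Set ℝ) (hA : MeasurableSet A) (hB : MeasurableSet B)
    (hAs : A ⊆ Set.Ico 0 (2 * Real.pi)) (hBs : B ⊆ Set.Ico 0 (2 * Real.pi))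
    (hd : Disjoint A B) : μs (A ∪ B) = μs A + μs B := by
  classical
  set g : ℕ → Set ℝ := fun i => if i = 0 then A else if i = 1 then B else ∅ with hg
  have hgm : ∀ i, MeasurableSet (g i) := by
    intro i; simp only [hg]; split_ifs <;> simp [hA, hB]
  have hgs : ∀ i, g i ⊆ Set.Ico 0 (2 * Real.pi) := by
    intro i; simp only [hg]; split_ifs <;> simp [hAs, hBs]
  have hgd : Pairwise (Function.onFun Disjoint g) := by
    intro i j hij
    simp only [Function.onFun, hg]
    split_ifs <;> simp_all <;> first
      | exact hd
      | exact hd.symm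
  have hU : (⋃ i, g i) = A ∪ B := by
    apply Set.Subset.antisymm
    · apply Set.iUnion_subset
      intro i
      simp only [hg]
      split_ifs <;> simp
    · apply Set.union_subset
      · exact le_iSup g 0
      · exact le_iSup g 1
  have h1 := hσ g hgm hgs hgd
  rw [hU] at h1
  have h2 : HasSum (fun i => μs (g i)) (∑ i ∈ Finset.range 2, μs (g i)) := by
    apply hasSum_sum_of_ne_finset_zero
    intro i hi
    have hi0 : i ≠ 0 := by rintro rfl; simp at hi
    have hi1 : i ≠ 1 := by rintro rfl; simp at hi
    simp only [hg, if_neg hi0, if_neg hi1]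
    exact mu_empty μs hσ
  have := h1.unique h2
  rw [this]
  simp [Finset.sum_range_succ, hg]

lemma key
    (hσ : ∀ g : ℕ → Set ℝ, (∀ i, MeasurableSet (g i)) →
      (∀ i, g i ⊆ Set.Ico 0 (2 * Real.pi)) → Pairwise (Function.onFun Disjoint g) →
      HasSum (fun i => μs (g i)) (μs (⋃ i, g i)))
    (f : ℝ → ℂ) (hfc : Continuous f)
    (hIco : ∀ a b : ℝ, 0 ≤ a → a ≤ b → b ≤ 2 * Real.pi →
      μs (Set.Ico a b) = ∫ θ in Set.Ico a b, f θ) :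
    ∀ X : Set ℝ, MeasurableSet X → X ⊆ Set.Ico 0 (2 * Real.pi) → μs X = ∫ θ in X, f θ := by
  classical
  have h2pi : (0:ℝ) < 2 * Real.pi := by positivity
  have hind : Integrable ((Set.Ico (0:ℝ) (2*Real.pi)).indicator f) := by
    rw [integrable_indicator_iff measurableSet_Ico]
    exact (hfc.continuousOn.integrableOn_compact (isCompact_Icc (a := (0:ℝ))
      (b := 2*Real.pi))).mono_set Set.Ico_subset_Icc_self
  set I2 : Set ℝ := Set.Ico 0 (2 * Real.pi) with hI2
  have hI2m : MeasurableSet I2 := measurableSet_Ico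
  set T : ComplexMeasure ℝ :=
    { measureOf' := fun X => if MeasurableSet X then μs (X ∩ I2) else 0
      empty' := by simp [mu_empty μs hσ]
      not_measurable' := fun X hX => if_neg hX
      m_iUnion' := by
        intro g hgm hgd
        simp only [if_pos, hgm, MeasurableSet.iUnion hgm]
        have h1 := hσ (fun i => g i ∩ I2) (fun i => (hgm i).inter hI2m)
          (fun i => Set.inter_subset_right) (fun i j hij =>
            ((hgd hij).mono Set.inter_subset_left Set.inter_subset_left))
        rw [← Set.iUnion_inter] at h1
        exact h1 } with hT
  have hTval : ∀ X : Set ℝ, MeasurableSet X → X ⊆ I2 → T X = μs X := by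
    intro X hX hXs
    show (if MeasurableSet X then μs (X ∩ I2) else 0) = μs X
    rw [if_pos hX, Set.inter_eq_self_of_subset_left hXs]
  set ν : ComplexMeasure ℝ := volume.withDensityᵥ (I2.indicator f) with hν
  have hTν : T = ν := by
    apply complex_ext_Ico
    intro a b hab
    have hIab : MeasurableSet (Set.Ico a b) := measurableSet_Ico
    have hL : T (Set.Ico a b) = μs (Set.Ico a b ∩ I2) := if_pos hIab
    have hR : ν (Set.Ico a b) = ∫ θ in Set.Ico a b ∩ I2, f θ := by
      rw [hν, withDensityᵥ_apply hind hIab, setIntegral_indicator hI2m]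
    rw [hL, hR, hI2, Set.Ico_inter_Ico]
    rcases le_or_gt (a ⊔ 0) (b ⊓ (2 * Real.pi)) with hle | hlt
    · exact hIco _ _ (le_max_right a 0) hle (min_le_right _ _)
    · rw [Set.Ico_eq_empty (not_lt.mpr hlt.le), mu_empty μs hσ, MeasureTheory.setIntegral_empty]
  intro X hX hXs
  have h1 : μs X = T X := (hTval X hX hXs).symm
  rw [h1, hTν, hν, withDensityᵥ_apply hind hX, setIntegral_indicator hI2m,
    Set.inter_eq_self_of_subset_left hXs]

end Key

section PerPair

lemma per_pair (μs : Set ℝ → ℂ) (k : ℤ)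
    (hσ : ∀ g : ℕ → Set ℝ, (∀ i, MeasurableSet (g i)) →
      (∀ i, g i ⊆ Set.Ico 0 (2 * Real.pi)) → Pairwise (Function.onFun Disjoint g) →
      HasSum (fun i => μs (g i)) (μs (⋃ i, g i)))
    (hcov' : ∀ θ : ℝ, 0 ≤ θ → θ < 2 * Real.pi → ∀ X : Set ℝ, MeasurableSet X →
      X ⊆ Set.Ico 0 (2 * Real.pi) →
      μs (wrapAdd θ '' X) = Complex.exp (Complex.I * (k : ℂ) * (θ : ℂ)) * μs X)
    (hnorm1 : k = 0 → μs (Set.Ico 0 (2 * Real.pi)) = 1) :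
    ∃ C : ℂ, (k = 0 → C = (2 * Real.pi : ℂ)⁻¹) ∧
      ∀ X : Set ℝ, MeasurableSet X → X ⊆ Set.Ico 0 (2 * Real.pi) →
        μs X = ∫ θ in X, C * Complex.exp (Complex.I * (k : ℂ) * (θ : ℂ)) := by
  have h2π : (0:ℝ) < 2 * Real.pi := by positivity
  have hπ : (0:ℝ) < Real.pi := Real.pi_pos
  have h0 : μs ∅ = 0 := mu_empty μs hσ
  have hU : ∀ a b c : ℝ, 0 ≤ a → a ≤ b → b ≤ c → c ≤ 2 * Real.pi →
      μs (Set.Ico a c) = μs (Set.Ico a b) + μs (Set.Ico b c) := by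
    intro a b c ha hab hbc hc
    rw [← Set.Ico_union_Ico_eq_Ico hab hbc]
    exact mu_union μs hσ _ _ measurableSet_Ico measurableSet_Ico
      (Set.Ico_subset_Ico ha (by linarith)) (Set.Ico_subset_Ico (by linarith) hc)
      Set.Ico_disjoint_Ico_same
  have hwrap : ∀ θ a b : ℝ, 0 ≤ θ → b + θ ≤ 2 * Real.pi →
      wrapAdd θ '' Set.Ico a b = Set.Ico (a + θ) (b + θ) := by
    intro θ a b hθ hb
    have : wrapAdd θ '' Set.Ico a b = (fun x => x + θ) '' Set.Ico a b := by
      apply Set.image_congr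
      intro x hx
      have : x + θ < 2 * Real.pi := by
        rcases hx with ⟨_, hxb⟩; linarith
      simp [wrapAdd, this]
    rw [this, Set.image_add_const_Ico]
  have hG1 : ∀ θ t : ℝ, 0 ≤ θ → 0 ≤ t → θ + t ≤ 2 * Real.pi →
      μs (Set.Ico θ (θ + t)) = Complex.exp (Complex.I * (k : ℂ) * (θ : ℂ)) *
        μs (Set.Ico 0 t) := by
    intro θ t hθ ht hsum
    rcases eq_or_lt_of_le ht with h | htpos
    · rw [← h]
      simp [Set.Ico_self, h0]
    · have hθlt : θ < 2 * Real.pi := by linarith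
      have himg : wrapAdd θ '' Set.Ico 0 t = Set.Ico θ (θ + t) := by
        rw [hwrap θ 0 t hθ (by linarith), zero_add, add_comm]
      rw [← himg]
      exact hcov' θ hθ hθlt _ measurableSet_Ico
        (Set.Ico_subset_Ico le_rfl (by linarith))
  have hfe : ∀ θ t : ℝ, 0 ≤ θ → 0 ≤ t → θ + t ≤ 2 * Real.pi →
      μs (Set.Ico 0 (θ + t)) = μs (Set.Ico 0 θ) +
        Complex.exp (Complex.I * (k : ℂ) * (θ : ℂ)) * μs (Set.Ico 0 t) := by
    intro θ t hθ ht hsum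
    rw [hU 0 θ (θ + t) le_rfl hθ (by linarith) hsum, hG1 θ t hθ ht hsum]
  by_cases hk : k = 0
  · subst hk
    have hexp1 : ∀ θ : ℝ, Complex.exp (Complex.I * ((0:ℤ) : ℂ) * (θ : ℂ)) = 1 := by
      intro θ; simp
    have hadd0 : ∀ θ t : ℝ, 0 ≤ θ → 0 ≤ t → θ + t ≤ 2 * Real.pi →
        μs (Set.Ico 0 (θ + t)) = μs (Set.Ico 0 θ) + μs (Set.Ico 0 t) := by
      intro θ t hθ ht hs
      rw [hfe θ t hθ ht hs, hexp1, one_mul]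
    have hone : μs (Set.Ico 0 (2 * Real.pi)) = 1 := hnorm1 rfl
    have hmul : ∀ (j : ℕ) (u : ℝ), 0 ≤ u → (j : ℝ) * u ≤ 2 * Real.pi →
        μs (Set.Ico 0 ((j:ℝ) * u)) = (j : ℂ) * μs (Set.Ico 0 u) := by
      intro j
      induction j with
      | zero => intro u hu _; simp [h0]
      | succ j ih =>
        intro u hu hj
        push_cast at hj
        have hju : (j : ℝ) * u ≤ 2 * Real.pi := by nlinarith
        have h1 : ((j+1 : ℕ) : ℝ) * u = (j:ℝ) * u + u := by push_cast; ring
        rw [h1, hadd0 ((j:ℝ)*u) u (by positivity) hu (by nlinarith),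
          ih u hu hju]
        push_cast; ring
    have hlin : ∀ t : ℝ, 0 ≤ t → t < 2 * Real.pi →
        μs (Set.Ico 0 t) = ((t / (2 * Real.pi) : ℝ) : ℂ) := by
      intro t ht htlt
      rcases eq_or_lt_of_le ht with h | htpos
      · rw [← h]; simp [Set.Ico_self, h0]
      set δ : ℕ → ℝ := fun j => 2 * Real.pi / 2 ^ j with hδ
      have hδpos : ∀ j, 0 < δ j := fun j => by simp only [hδ]; positivity
      set a : ℕ → ℕ := fun j => ⌊t / δ j⌋₊ with ha
      set q : ℕ → ℝ := fun j => (a j : ℝ) * δ j with hq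
      have hq0' : ∀ j, 0 ≤ q j := fun j => by
        simp only [hq]; positivity
      have hqle : ∀ j, q j ≤ t := by
        intro j
        have h1 : (a j : ℝ) ≤ t / δ j := Nat.floor_le (by positivity)
        simp only [hq]
        calc (a j : ℝ) * δ j ≤ (t / δ j) * δ j :=
              mul_le_mul_of_nonneg_right h1 (hδpos j).le
          _ = t := div_mul_cancel₀ t (hδpos j).ne'
      have hqlt : ∀ j, t < q j + δ j := by
        intro j
        have h1 : t / δ j < (a j : ℝ) + 1 := Nat.lt_floor_add_one _
        have h2 := (div_lt_iff₀ (hδpos j)).mp h1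
        simp only [hq]; nlinarith [hδpos j]
      have hδhalf : ∀ j, δ (j+1) = δ j / 2 := by
        intro j; simp only [hδ]; rw [pow_succ]; ring
      have hmono : ∀ j, q j ≤ q (j + 1) := by
        intro j
        have h2 : (a j : ℝ) ≤ t / δ j := Nat.floor_le (by positivity)
        have h3 : ((2 * a j : ℕ) : ℝ) ≤ t / δ (j+1) := by
          rw [hδhalf j]
          have h4 : t / (δ j / 2) = 2 * (t / δ j) := by
            field_simp
          rw [h4]; push_cast; linarith
        have h4 : 2 * a j ≤ a (j+1) := Nat.le_floor h3
        simp only [hq]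
        calc (a j : ℝ) * δ j = ((2 * a j : ℕ) : ℝ) * δ (j+1) := by
              rw [hδhalf j]; push_cast; ring
          _ ≤ (a (j+1) : ℝ) * δ (j+1) :=
              mul_le_mul_of_nonneg_right (by exact_mod_cast h4) (hδpos _).le
      have hmono' : Monotone q := monotone_nat_of_le_succ hmono
      have hq0 : q 0 = 0 := by
        have h5 : a 0 = 0 := by
          simp only [ha, hδ, pow_zero, div_one]
          exact Nat.floor_eq_zero.mpr (by rw [div_lt_one h2π]; exact htlt)
        simp only [hq, h5, Nat.cast_zero, zero_mul]
      have hδval : ∀ j : ℕ, μs (Set.Ico 0 (δ j)) = ((2:ℂ) ^ j)⁻¹ := by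
        intro j
        have h1 : (((2:ℕ) ^ j : ℕ) : ℝ) * δ j = 2 * Real.pi := by
          push_cast; simp only [hδ]; field_simp
        have h2 := hmul (2 ^ j) (δ j) (hδpos j).le (le_of_eq h1)
        rw [h1, hone] at h2
        push_cast at h2
        exact eq_inv_of_mul_eq_one_right h2.symm
      have hqval : ∀ j : ℕ, μs (Set.Ico 0 (q j)) = ((q j / (2 * Real.pi) : ℝ) : ℂ) := by
        intro j
        have h1 := hmul (a j) (δ j) (hδpos j).le
          (by rw [show ((a j : ℕ):ℝ) * δ j = q j by simp only [hq]]; linarith [hqle j])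
        rw [show ((a j : ℕ):ℝ) * δ j = q j by simp only [hq]] at h1
        rw [h1, hδval j]
        have h2 : q j / (2 * Real.pi) = (a j : ℝ) / 2^j := by
          simp only [hq, hδ]
          field_simp
        rw [h2]; push_cast; field_simp
      have hFm : ∀ j:ℕ, MeasurableSet (Set.Ico (q j) (q (j+1))) := fun _ => measurableSet_Ico
      have hFs : ∀ j:ℕ, Set.Ico (q j) (q (j+1)) ⊆ Set.Ico 0 (2*Real.pi) := fun j =>
        Set.Ico_subset_Ico (hq0' j) (by linarith [hqle (j+1)])
      have hFd : Pairwise (Function.onFun Disjoint (fun j => Set.Ico (q j) (q (j+1)))) := by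
        intro i j hij
        simp only [Function.onFun]
        rw [Set.Ico_disjoint_Ico]
        rcases lt_or_gt_of_ne hij with h | h
        · have h1 : q (i+1) ≤ q j := hmono' (by omega)
          calc min (q (i+1)) (q (j+1)) ≤ q (i+1) := min_le_left _ _
            _ ≤ max (q i) (q j) := le_trans h1 (le_max_right _ _)
        · have h1 : q (j+1) ≤ q i := hmono' (by omega)
          calc min (q (i+1)) (q (j+1)) ≤ q (j+1) := min_le_right _ _
            _ ≤ max (q i) (q j) := le_trans h1 (le_max_left _ _)
      have hFU : (⋃ j, Set.Ico (q j) (q (j+1))) = Set.Ico 0 t := by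
        apply Set.Subset.antisymm
        · apply Set.iUnion_subset; intro j x hx
          exact ⟨le_trans (hq0' j) hx.1, lt_of_lt_of_le hx.2 (hqle (j+1))⟩
        · intro x hx
          obtain ⟨hx1, hx2⟩ := hx
          have hex : ∃ j, x < q j := by
            obtain ⟨j, hj⟩ : ∃ j : ℕ, 2*Real.pi / (t - x) < 2^j :=
              pow_unbounded_of_one_lt _ one_lt_two
            refine ⟨j, ?_⟩
            have htx : 0 < t - x := by linarith
            have hδj : δ j < t - x := by
              rw [div_lt_iff₀ htx] at hj
              simp only [hδ]
              rw [div_lt_iff₀ (by positivity : (0:ℝ) < 2^j)]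
              nlinarith
            linarith [hqlt j]
          classical
          have hne : Nat.find hex ≠ 0 := by
            intro h
            have h5 := Nat.find_spec hex
            rw [h, hq0] at h5
            exact absurd h5 (not_lt.mpr hx1)
          obtain ⟨j, hj⟩ : ∃ j, Nat.find hex = j + 1 :=
            ⟨Nat.find hex - 1, (Nat.succ_pred_eq_of_pos (Nat.pos_of_ne_zero hne)).symm⟩
          have h1 : ¬ x < q j := Nat.find_min hex (by omega)
          have h2 : x < q (j+1) := by have h5 := Nat.find_spec hex; rwa [hj] at h5
          exact Set.mem_iUnion.mpr ⟨j, not_lt.mp h1, h2⟩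
      have hsum := hσ (fun j => Set.Ico (q j) (q (j+1))) hFm hFs hFd
      rw [hFU] at hsum
      have hpartial : ∀ J : ℕ, (∑ j ∈ Finset.range J, μs (Set.Ico (q j) (q (j+1))))
          = μs (Set.Ico 0 (q J)) := by
        intro J
        induction J with
        | zero => simp [hq0, h0, Set.Ico_self]
        | succ J ih =>
          rw [Finset.sum_range_succ, ih]
          exact (hU 0 (q J) (q (J+1)) le_rfl (hq0' J) (hmono J)
            (by linarith [hqle (J+1)])).symm
      have ht1 : Filter.Tendsto (fun J => μs (Set.Ico 0 (q J))) Filter.atTop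
          (nhds (μs (Set.Ico 0 t))) := by
        have h5 := hsum.tendsto_sum_nat
        simpa only [hpartial] using h5
      have ht2 : Filter.Tendsto (fun J => μs (Set.Ico 0 (q J))) Filter.atTop
          (nhds ((t / (2*Real.pi) : ℝ) : ℂ)) := by
        simp only [hqval]
        have hq_t : Filter.Tendsto q Filter.atTop (nhds t) := by
          have hd0 : Filter.Tendsto δ Filter.atTop (nhds 0) := by
            have h5 : δ = fun j => (2*Real.pi) * (2⁻¹:ℝ)^j := by
              funext j; simp only [hδ]; rw [inv_pow]; ring
            rw [h5]
            have h6 := tendsto_pow_atTop_nhds_zero_of_lt_one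
              (by norm_num : (0:ℝ) ≤ 2⁻¹) (by norm_num : (2⁻¹:ℝ) < 1)
            simpa using h6.const_mul (2*Real.pi)
          have hlow : Filter.Tendsto (fun J => t - δ J) Filter.atTop (nhds t) := by
            simpa using (tendsto_const_nhds.sub hd0)
          apply tendsto_of_tendsto_of_tendsto_of_le_of_le hlow tendsto_const_nhds
          · intro J; dsimp only; linarith [hqlt J]
          · intro J; exact hqle J
        exact (Complex.continuous_ofReal.tendsto _).comp (hq_t.div_const _)
      exact tendsto_nhds_unique ht1 ht2
    have hlin' : ∀ t : ℝ, 0 ≤ t → t ≤ 2 * Real.pi →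
        μs (Set.Ico 0 t) = ((t / (2 * Real.pi) : ℝ) : ℂ) := by
      intro t ht ht2
      rcases lt_or_eq_of_le ht2 with h | h
      · exact hlin t ht h
      · rw [h, hone, div_self h2π.ne']; norm_num
    have hIco : ∀ a b : ℝ, 0 ≤ a → a ≤ b → b ≤ 2 * Real.pi →
        μs (Set.Ico a b) = ∫ θ in Set.Ico a b, (2 * Real.pi : ℂ)⁻¹ *
          Complex.exp (Complex.I * ((0:ℤ) : ℂ) * (θ : ℂ)) := by
      intro a b ha hab hb
      have h1 : μs (Set.Ico a b) = Complex.exp (Complex.I * ((0:ℤ):ℂ) * (a:ℂ)) *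
          μs (Set.Ico 0 (b - a)) := by
        have h5 := hG1 a (b - a) ha (by linarith) (by linarith)
        rwa [show a + (b - a) = b by ring] at h5
      rw [h1, hexp1, one_mul, hlin' (b-a) (by linarith) (by linarith)]
      simp only [Int.cast_zero, mul_zero, zero_mul, Complex.exp_zero, mul_one]
      rw [setIntegral_const, Real.volume_real_Ico_of_le hab,
        Complex.real_smul]
      push_cast
      rw [div_eq_mul_inv]
    refine ⟨(2 * Real.pi : ℂ)⁻¹, fun _ => rfl, ?_⟩
    exact key μs hσ _ (continuous_const.mul (Complex.continuous_exp.comp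
      (continuous_const.mul Complex.continuous_ofReal))) hIco
  · -- k ≠ 0
    have hkabs : (1:ℝ) ≤ |(k:ℝ)| := by
      have h1 : (1:ℤ) ≤ |k| := Int.one_le_abs (by exact_mod_cast hk)
      calc (1:ℝ) ≤ ((|k| : ℤ) : ℝ) := by exact_mod_cast h1
        _ = |(k:ℝ)| := by push_cast; ring
    have hkabs0 : (0:ℝ) < |(k:ℝ)| := by linarith
    set θ0 : ℝ := Real.pi / (2 * |(k:ℝ)|) with hθ0
    have hθ0pos : 0 < θ0 := by rw [hθ0]; positivity
    have hθ0le : θ0 ≤ Real.pi / 2 := by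
      rw [hθ0, div_le_div_iff₀ (by positivity) (by norm_num)]
      nlinarith
    have hkθ0 : |(k:ℝ)| * θ0 = Real.pi / 2 := by
      rw [hθ0]; field_simp
    have hek : Complex.exp (Complex.I * (k:ℂ) * (θ0:ℂ)) ≠ 1 := by
      intro hcon
      rw [Complex.exp_eq_one_iff] at hcon
      obtain ⟨z, hz⟩ := hcon
      have hz' : (((k:ℝ) * θ0 : ℝ) : ℂ) * Complex.I
          = (((z:ℝ) * (2*Real.pi) : ℝ) : ℂ) * Complex.I := by
        push_cast
        linear_combination hz
      have hreal : (k:ℝ) * θ0 = (z:ℝ) * (2*Real.pi) :=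
        Complex.ofReal_inj.mp (mul_right_cancel₀ Complex.I_ne_zero hz')
      have habs : |(k:ℝ)| * θ0 = |(z:ℝ)| * (2*Real.pi) := by
        have h6 : |(k:ℝ) * θ0| = |(z:ℝ) * (2*Real.pi)| := by rw [hreal]
        rwa [abs_mul, abs_mul, abs_of_pos hθ0pos, abs_of_pos h2π] at h6
      rw [hkθ0] at habs
      rcases eq_or_ne z 0 with rfl | hz0
      · simp at habs
      · have h7 : (1:ℝ) ≤ |(z:ℝ)| := by
          have h8 : (1:ℤ) ≤ |z| := Int.one_le_abs hz0
          calc (1:ℝ) ≤ ((|z| : ℤ) : ℝ) := by exact_mod_cast h8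
            _ = |(z:ℝ)| := by push_cast; ring
        nlinarith
    have hden : (1:ℂ) - Complex.exp (Complex.I * (k:ℂ) * (θ0:ℂ)) ≠ 0 :=
      sub_ne_zero.mpr (Ne.symm hek)
    have hsym : ∀ t : ℝ, 0 ≤ t → t + θ0 ≤ 2*Real.pi →
        μs (Set.Ico 0 t) * (1 - Complex.exp (Complex.I*(k:ℂ)*(θ0:ℂ)))
        = μs (Set.Ico 0 θ0) * (1 - Complex.exp (Complex.I*(k:ℂ)*(t:ℂ))) := by
      intro t ht hsum
      have h1 := hfe θ0 t hθ0pos.le ht (by linarith)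
      have h2 := hfe t θ0 ht hθ0pos.le hsum
      rw [show θ0 + t = t + θ0 by ring] at h1
      linear_combination h1 - h2
    set c0 : ℂ := μs (Set.Ico 0 θ0) / (1 - Complex.exp (Complex.I*(k:ℂ)*(θ0:ℂ))) with hc0
    have hsmall : ∀ t : ℝ, 0 ≤ t → t + θ0 ≤ 2*Real.pi →
        μs (Set.Ico 0 t) = c0 * (1 - Complex.exp (Complex.I*(k:ℂ)*(t:ℂ))) := by
      intro t ht hsum
      rw [hc0, div_mul_eq_mul_div, eq_div_iff hden]
      linear_combination hsym t ht hsum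
    have hgt : ∀ t : ℝ, 0 ≤ t → t ≤ 2*Real.pi →
        μs (Set.Ico 0 t) = c0 * (1 - Complex.exp (Complex.I*(k:ℂ)*(t:ℂ))) := by
      intro t ht ht2
      rcases le_or_gt (t + θ0) (2*Real.pi) with hcase | hcase
      · exact hsmall t ht hcase
      · have ht22 : t/2 + θ0 ≤ 2*Real.pi := by linarith
        have h1 := hsmall (t/2) (by linarith) ht22
        have h2 := hfe (t/2) (t/2) (by linarith) (by linarith) (by linarith)
        rw [show t/2 + t/2 = t by ring] at h2
        rw [h2, h1]
        have hEE : Complex.exp (Complex.I*(k:ℂ)*((t/2:ℝ):ℂ)) *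
            Complex.exp (Complex.I*(k:ℂ)*((t/2:ℝ):ℂ)) =
            Complex.exp (Complex.I*(k:ℂ)*(t:ℂ)) := by
          rw [← Complex.exp_add]; congr 1; push_cast; ring
        linear_combination (-c0) * hEE
    have hκ : Complex.I * (k:ℂ) ≠ 0 :=
      mul_ne_zero Complex.I_ne_zero (by exact_mod_cast hk)
    have hIco : ∀ a b : ℝ, 0 ≤ a → a ≤ b → b ≤ 2 * Real.pi →
        μs (Set.Ico a b) = ∫ θ in Set.Ico a b, -(Complex.I * (k:ℂ)) * c0 *
          Complex.exp (Complex.I * (k:ℂ) * (θ:ℂ)) := by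
      intro a b ha hab hb
      have h1 : μs (Set.Ico a b) = Complex.exp (Complex.I*(k:ℂ)*(a:ℂ)) *
          μs (Set.Ico 0 (b-a)) := by
        have h5 := hG1 a (b-a) ha (by linarith) (by linarith)
        rwa [show a + (b-a) = b by ring] at h5
      rw [h1, hgt (b-a) (by linarith) (by linarith)]
      have h2 : (∫ θ in Set.Ico a b, -(Complex.I * (k:ℂ)) * c0 *
          Complex.exp (Complex.I*(k:ℂ)*(θ:ℂ)))
          = -(Complex.I * (k:ℂ)) * c0 * ((Complex.exp (Complex.I*(k:ℂ)*(b:ℂ))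
            - Complex.exp (Complex.I*(k:ℂ)*(a:ℂ))) / (Complex.I*(k:ℂ))) := by
        rw [integral_Ico_eq_integral_Ioo, ← integral_Ioc_eq_integral_Ioo,
          ← intervalIntegral.integral_of_le hab, intervalIntegral.integral_const_mul,
          integral_exp_mul_complex hκ]
      rw [h2]
      have h3 : -(Complex.I * (k:ℂ)) * c0 * ((Complex.exp (Complex.I*(k:ℂ)*(b:ℂ))
          - Complex.exp (Complex.I*(k:ℂ)*(a:ℂ))) / (Complex.I*(k:ℂ)))
          = -c0 * (Complex.exp (Complex.I*(k:ℂ)*(b:ℂ))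
            - Complex.exp (Complex.I*(k:ℂ)*(a:ℂ))) := by
        field_simp
      rw [h3]
      have hEE : Complex.exp (Complex.I*(k:ℂ)*(a:ℂ)) *
          Complex.exp (Complex.I*(k:ℂ)*((b-a:ℝ):ℂ)) =
          Complex.exp (Complex.I*(k:ℂ)*(b:ℂ)) := by
        rw [← Complex.exp_add]; congr 1; push_cast; ring
      linear_combination (-c0) * hEE
    refine ⟨-(Complex.I * (k:ℂ)) * c0, fun h => absurd h hk, ?_⟩
    exact key μs hσ _ (continuous_const.mul (Complex.continuous_exp.comp
      (continuous_const.mul Complex.continuous_ofReal))) hIco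

end PerPair

end AuxLemmas

/-- Any covariant normalized (weakly σ-additive) operator measure
`E : B([0,2π)) → L(H)` has matrix elements
`⟪n, E(X) m⟫ = c_{n,m} (2π)⁻¹ ∫_X e^{i(n-m)θ} dθ` with `c_{n,n} = 1`. -/
theorem covariant_normalized_operator_measure_matrix_form
    {H : Type*} [NormedAddCommGroup H] [InnerProductSpace ℂ H] [CompleteSpace H]
    (e : HilbertBasis ℤ ℂ H)
    (R : ℝ → (H →L[ℂ] H))
    (hR : ∀ (θ : ℝ) (n : ℤ), R θ (e n) = Complex.exp (Complex.I * (n : ℂ) * (θ : ℂ)) • e n)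
    (E : Set ℝ → (H →L[ℂ] H))
    (hnorm : E (Set.Ico 0 (2 * Real.pi)) = 1)
    (hadd : ∀ f : ℕ → Set ℝ, (∀ i, MeasurableSet (f i)) →
      (∀ i, f i ⊆ Set.Ico 0 (2 * Real.pi)) → Pairwise (Function.onFun Disjoint f) →
      ∀ u v : H, HasSum (fun i => (inner ℂ u (E (f i) v) : ℂ))
        (inner ℂ u (E (⋃ i, f i) v) : ℂ))
    (hcov : ∀ θ ∈ Set.Ico (0 : ℝ) (2 * Real.pi),
      ∀ X : Set ℝ, MeasurableSet X → X ⊆ Set.Ico 0 (2 * Real.pi) →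
        E (wrapAdd θ '' X) = R θ * E X * ContinuousLinearMap.adjoint (R θ)) :
    ∃ c : ℤ → ℤ → ℂ, (∀ n, c n n = 1) ∧
      ∀ (n m : ℤ) (X : Set ℝ), MeasurableSet X → X ⊆ Set.Ico 0 (2 * Real.pi) →
        (inner ℂ (e n) (E X (e m)) : ℂ) = c n m * (2 * Real.pi : ℂ)⁻¹ *
          ∫ θ in X, Complex.exp (Complex.I * ((n : ℂ) - (m : ℂ)) * (θ : ℂ)) := by
  have h2π : (0:ℝ) < 2 * Real.pi := by positivity
  have horth : ∀ i j : ℤ, (inner ℂ (e i) (e j) : ℂ) = if i = j then 1 else 0 :=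
    fun i j => orthonormal_iff_ite.mp e.orthonormal i j
  have hRadj : ∀ (θ : ℝ) (j : ℤ), ContinuousLinearMap.adjoint (R θ) (e j)
      = Complex.exp (-(Complex.I * (j:ℂ) * (θ:ℂ))) • e j := by
    intro θ j
    apply e.repr.injective
    ext i
    rw [HilbertBasis.repr_apply_apply, HilbertBasis.repr_apply_apply]
    rw [ContinuousLinearMap.adjoint_inner_right, hR θ i, inner_smul_left, inner_smul_right,
      horth]
    by_cases h : i = j
    · subst h
      simp only [if_pos rfl, mul_one]
      rw [← Complex.exp_conj]
      congr 1
      simp [map_mul, Complex.conj_I, Complex.conj_ofReal]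
    · simp [if_neg h]
  have main : ∀ n m : ℤ, ∃ C : ℂ, (n - m = 0 → C = (2 * Real.pi : ℂ)⁻¹) ∧
      ∀ X : Set ℝ, MeasurableSet X → X ⊆ Set.Ico 0 (2 * Real.pi) →
        (inner ℂ (e n) (E X (e m)) : ℂ) = ∫ θ in X, C *
          Complex.exp (Complex.I * ((n - m : ℤ) : ℂ) * (θ : ℂ)) := by
    intro n m
    have hσ : ∀ g : ℕ → Set ℝ, (∀ i, MeasurableSet (g i)) →
        (∀ i, g i ⊆ Set.Ico 0 (2 * Real.pi)) → Pairwise (Function.onFun Disjoint g) →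
        HasSum (fun i => (inner ℂ (e n) (E (g i) (e m)) : ℂ))
          ((inner ℂ (e n) (E (⋃ i, g i) (e m)) : ℂ)) :=
      fun g h1 h2 h3 => hadd g h1 h2 h3 (e n) (e m)
    have hcov' : ∀ θ : ℝ, 0 ≤ θ → θ < 2 * Real.pi → ∀ X : Set ℝ, MeasurableSet X →
        X ⊆ Set.Ico 0 (2 * Real.pi) →
        (inner ℂ (e n) (E (wrapAdd θ '' X) (e m)) : ℂ)
          = Complex.exp (Complex.I * ((n - m : ℤ) : ℂ) * (θ : ℂ)) *
            (inner ℂ (e n) (E X (e m)) : ℂ) := by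
      intro θ hθ0 hθ2 X hXm hXs
      rw [hcov θ ⟨hθ0, hθ2⟩ X hXm hXs]
      rw [ContinuousLinearMap.mul_apply, ContinuousLinearMap.mul_apply, hRadj θ m,
        _root_.map_smul, _root_.map_smul, inner_smul_right]
      rw [← ContinuousLinearMap.adjoint_adjoint (R θ), ContinuousLinearMap.adjoint_inner_right,
        hRadj θ n, inner_smul_left]
      rw [← Complex.exp_conj]
      rw [show (starRingEnd ℂ) (-(Complex.I * (n:ℂ) * (θ:ℂ))) = Complex.I * (n:ℂ) * (θ:ℂ) by
        simp [map_mul, Complex.conj_I, Complex.conj_ofReal]]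
      rw [← mul_assoc, ← Complex.exp_add]
      congr 2
      push_cast
      ring
    have hnorm1 : (n - m = 0) →
        (inner ℂ (e n) (E (Set.Ico 0 (2 * Real.pi)) (e m)) : ℂ) = 1 := by
      intro hk
      have hnm : n = m := by omega
      subst hnm
      rw [hnorm, ContinuousLinearMap.one_apply, horth, if_pos rfl]
    exact per_pair (fun X => (inner ℂ (e n) (E X (e m)) : ℂ)) (n - m) hσ hcov' hnorm1
  choose C hC1 hC2 using main
  refine ⟨fun n m => 2 * Real.pi * C n m, fun n => ?_, fun n m X hX hXs => ?_⟩
  · show (2 * (Real.pi:ℂ) * C n n) = 1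
    rw [hC1 n n (sub_self n)]
    have h1 : ((2:ℂ) * (Real.pi:ℂ)) ≠ 0 := by
      simp only [ne_eq, mul_eq_zero, not_or]
      constructor
      · norm_num
      · exact_mod_cast Real.pi_ne_zero
    field_simp
  · show _ = (2 * (Real.pi:ℂ) * C n m) * (2 * (Real.pi:ℂ))⁻¹ * _
    rw [hC2 n m X hX hXs]
    have hint : (∫ θ in X, C n m * Complex.exp (Complex.I * ((n - m : ℤ):ℂ) * (θ:ℂ)))
        = C n m * ∫ θ in X, Complex.exp (Complex.I * ((n:ℂ) - (m:ℂ)) * (θ:ℂ)) := by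
      push_cast
      exact integral_const_mul _ _
    rw [hint]
    have h1 : ((2:ℂ) * (Real.pi:ℂ)) ≠ 0 := by
      simp only [ne_eq, mul_eq_zero, not_or]
      constructor
      · norm_num
      · exact_mod_cast Real.pi_ne_zero
    field_simp
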